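/- Fix an integer k ≥ 2. If aub ∼_k cvd where a, b, c, d are letters and u, v are words, then u ∼_{k−1} v. -/

import Mathlib

/-- Number of occurrences of `x` as a factor of `w`. -/
def occ {A : Type*} [DecidableEq A] (w x : List A) : ℕ :=
  ((List.range (w.length + 1)).filter (fun i => decide (x <+: w.drop i))).length

/-- `k`-Abelian equivalence. -/
def KAbEq {A : Type*} [DecidableEq A] (k : ℕ) (u v : List A) : Prop :=
  ∀ x : List A, x ≠ [] → x.length ≤ k → occ u x = occ v x

section aux
variable {A : Type*} [DecidableEq A]

lemma occ_nil (x : List A) (hx : x ≠ []) : occ ([] : List A) x = 0 := by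
  simp [occ, List.prefix_nil, hx]

lemma occ_cons (a : A) (w x : List A) :
    occ (a :: w) x = (if x <+: a :: w then 1 else 0) + occ w x := by
  unfold occ
  rw [show (a :: w).length + 1 = w.length + 1 + 1 from rfl, List.range_succ_eq_map]
  rw [List.filter_cons]
  simp only [List.drop_zero, List.filter_map, List.length_map, Function.comp_def,
    List.drop_succ_cons]
  split <;> simp_all <;> omega

lemma concat_suffix_concat (x w : List A) (e b : A) :
    x ++ [e] <:+ w ++ [b] ↔ e = b ∧ x <:+ w := by
  rw [← List.reverse_prefix]
  simp [List.cons_prefix_iff]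
  exact fun _ => eq_comm

lemma occ_concat (w : List A) (b : A) (x : List A) (hx : x ≠ []) :
    occ (w ++ [b]) x = occ w x + (if x <:+ w ++ [b] then 1 else 0) := by
  induction w with
  | nil =>
    simp only [List.nil_append, occ_cons, occ_nil x hx]
    have h1 : (x <+: [b]) ↔ x = [b] := by
      rw [show ([b] : List A) = [] ++ [b] from rfl, List.prefix_concat_iff]
      simp [hx]
    have h2 : (x <:+ [b]) ↔ x = [b] := by
      rw [List.suffix_cons_iff]
      simp [hx]
    simp only [h1, h2, Nat.add_zero, Nat.zero_add]
  | cons a t ih =>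
    rw [List.cons_append, occ_cons, ih, occ_cons]
    have h1 : (x <+: a :: (t ++ [b])) ↔ (x = (a :: t) ++ [b]) ∨ x <+: a :: t := by
      rw [show a :: (t ++ [b]) = (a :: t) ++ [b] from rfl, List.prefix_concat_iff]
    have h2 : (x <:+ a :: (t ++ [b])) ↔ (x = (a :: t) ++ [b]) ∨ x <:+ t ++ [b] := by
      rw [show a :: (t ++ [b]) = (a :: t) ++ [b] from rfl]
      exact List.suffix_cons_iff
    by_cases hxx : x = (a :: t) ++ [b]
    · have hp : ¬ (x <+: a :: t) := fun hh => by
        rw [hxx] at hh; simpa using hh.length_le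
      have hs : ¬ (x <:+ t ++ [b]) := fun hh => by
        rw [hxx] at hh; simpa using hh.length_le
      rw [if_pos (h1.mpr (Or.inl hxx)), if_neg hs, if_neg hp, if_pos (h2.mpr (Or.inl hxx))]
      ring
    · simp only [h1, h2, hxx, false_or]
      ring

lemma occ_singleton (w : List A) (e : A) : occ w [e] = w.count e := by
  induction w with
  | nil => simp [occ_nil [e] (by simp)]
  | cons a t ih =>
    rw [occ_cons, ih, List.count_cons]
    have h1 : ([e] <+: a :: t) ↔ e = a := by
      simp [List.cons_prefix_cons]
    simp only [h1]
    by_cases hea : e = a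
    · simp [hea, Nat.add_comm]
    · simp [hea]
      exact fun hh => hea hh.symm

lemma occ_len (w : List A) (S : Finset A) (hS : ∀ e ∈ w, e ∈ S) :
    ∑ e ∈ S, occ w [e] = w.length := by
  rw [Finset.sum_congr rfl (fun e _ => occ_singleton w e)]
  have := Multiset.sum_count_eq_card (s := S) (m := (w : Multiset A)) (by simpa using hS)
  simpa using this

lemma occ_sum_prefix (S : Finset A) (x : List A) (hx : x ≠ []) :
    ∀ w : List A, (∀ e ∈ w, e ∈ S) →
      occ w x = (if x <+: w then 1 else 0) + ∑ e ∈ S, occ w (e :: x) := by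
  intro w
  induction w with
  | nil =>
    intro _
    rw [occ_nil x hx, Finset.sum_congr rfl (fun e _ => occ_nil (e :: x) (List.cons_ne_nil e x))]
    simp [List.prefix_nil, hx]
  | cons a t ih =>
    intro hS
    have haS : a ∈ S := hS a (by simp)
    rw [occ_cons, ih (fun e he => hS e (by simp [he]))]
    rw [Finset.sum_congr rfl (fun e _ => occ_cons a t (e :: x)), Finset.sum_add_distrib]
    have hsum : ∑ e ∈ S, (if e :: x <+: a :: t then 1 else 0) = if x <+: t then (1:ℕ) else 0 := by
      have hterm : ∀ e ∈ S, (if e :: x <+: a :: t then (1:ℕ) else 0)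
          = if e = a then (if x <+: t then 1 else 0) else 0 := by
        intro e _
        by_cases h : e = a
        · subst h; simp [List.cons_prefix_iff]
        · simp [List.cons_prefix_iff, h]
          exact fun hae => absurd hae.symm h
      rw [Finset.sum_congr rfl hterm, Finset.sum_ite_eq' S a (fun _ => if x <+: t then 1 else 0)]
      simp [haS]
    rw [hsum]
    try ring

lemma occ_sum_suffix (S : Finset A) (x : List A) (hx : x ≠ []) :
    ∀ w : List A, (∀ e ∈ w, e ∈ S) →
      occ w x = (if x <:+ w then 1 else 0) + ∑ e ∈ S, occ w (x ++ [e]) := by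
  intro w
  induction w using List.reverseRecOn with
  | nil =>
    intro _
    rw [occ_nil x hx, Finset.sum_congr rfl (fun e _ => occ_nil (x ++ [e]) (by simp))]
    simp [List.suffix_nil, hx]
  | append_singleton t b ih =>
    intro hS
    have hbS : b ∈ S := hS b (by simp)
    rw [occ_concat t b x hx, ih (fun e he => hS e (by simp [he]))]
    rw [Finset.sum_congr rfl (fun e _ => occ_concat t b (x ++ [e]) (by simp)),
      Finset.sum_add_distrib]
    have hsum : ∑ e ∈ S, (if x ++ [e] <:+ t ++ [b] then 1 else 0) = if x <:+ t then (1:ℕ) else 0 := by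
      have hterm : ∀ e ∈ S, (if x ++ [e] <:+ t ++ [b] then (1:ℕ) else 0)
          = if e = b then (if x <:+ t then 1 else 0) else 0 := by
        intro e _
        by_cases h : e = b
        · subst h; simp [concat_suffix_concat]
        · simp [concat_suffix_concat, h]
      rw [Finset.sum_congr rfl hterm, Finset.sum_ite_eq' S b (fun _ => if x <:+ t then 1 else 0)]
      simp [hbS]
    rw [hsum]
    try ring

end aux

theorem stmt6 {A : Type*} [DecidableEq A] (k : ℕ) (hk : 2 ≤ k)
    (a b c d : A) (u v : List A)
    (h : KAbEq k (a :: u ++ [b]) (c :: v ++ [d])) : KAbEq (k - 1) u v := by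
  intro x hx hxk
  set w₁ : List A := a :: u ++ [b] with hw₁
  set w₂ : List A := c :: v ++ [d] with hw₂
  set S : Finset A := w₁.toFinset ∪ w₂.toFinset with hS
  have hS₁ : ∀ e ∈ w₁, e ∈ S := fun e he => by
    simp [hS, List.mem_toFinset]; left; simpa using he
  have hS₂ : ∀ e ∈ w₂, e ∈ S := fun e he => by
    simp [hS, List.mem_toFinset]; right; simpa using he
  have hx1 : x.length ≤ k := by omega
  -- lengths
  have hlen : w₁.length = w₂.length := by
    rw [← occ_len w₁ S hS₁, ← occ_len w₂ S hS₂]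
    exact Finset.sum_congr rfl (fun e _ => h [e] (by simp) (by simp; omega))
  -- occurrence counts in the big words agree
  have hocc : occ w₁ x = occ w₂ x := h x hx hx1
  -- prefix indicators agree
  have hpre : (if x <+: w₁ then 1 else 0) = (if x <+: w₂ then (1:ℕ) else 0) := by
    have e1 := occ_sum_prefix S x hx w₁ hS₁
    have e2 := occ_sum_prefix S x hx w₂ hS₂
    have hsum : ∑ e ∈ S, occ w₁ (e :: x) = ∑ e ∈ S, occ w₂ (e :: x) :=
      Finset.sum_congr rfl (fun e _ => h (e :: x) (by simp) (by simp; omega))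
    rw [e1, hsum] at hocc
    -- hocc : _ + Σ = occ w₂ x ; e2 : occ w₂ x = _ + Σ
    rw [e2] at hocc
    exact Nat.add_right_cancel hocc
  -- suffix indicators agree
  have hsuf : (if x <:+ w₁ then 1 else 0) = (if x <:+ w₂ then (1:ℕ) else 0) := by
    have e1 := occ_sum_suffix S x hx w₁ hS₁
    have e2 := occ_sum_suffix S x hx w₂ hS₂
    have hocc' : occ w₁ x = occ w₂ x := h x hx hx1
    have hsum : ∑ e ∈ S, occ w₁ (x ++ [e]) = ∑ e ∈ S, occ w₂ (x ++ [e]) :=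
      Finset.sum_congr rfl (fun e _ => h (x ++ [e]) (by simp) (by simp; omega))
    rw [e1, hsum, e2] at hocc'
    exact Nat.add_right_cancel hocc'
  -- whole-word indicators agree
  have hwhole : (if x = w₁ then 1 else 0) = (if x = w₂ then (1:ℕ) else 0) := by
    by_cases h1 : x = w₁
    · have hp1 : x <+: w₂ := by
        by_contra hc
        rw [if_pos (h1 ▸ List.prefix_refl w₁ : x <+: w₁), if_neg hc] at hpre
        exact one_ne_zero hpre
      have hx2 : x = w₂ := hp1.eq_of_length (by rw [h1, hlen])
      rw [if_pos h1, if_pos hx2]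
    · by_cases h2 : x = w₂
      · have hp2 : x <+: w₁ := by
          by_contra hc
          rw [if_neg hc, if_pos (h2 ▸ List.prefix_refl w₂ : x <+: w₂)] at hpre
          exact zero_ne_one hpre
        exact absurd (hp2.eq_of_length (by rw [h2, hlen])) h1
      · simp [h1, h2]
  -- decomposition for w₁
  have d1 : occ w₁ x + (if x = w₁ then 1 else 0)
      = occ u x + (if x <+: w₁ then 1 else 0) + (if x <:+ w₁ then 1 else 0) := by
    rw [hw₁, show (a :: u ++ [b] : List A) = a :: (u ++ [b]) from rfl, occ_cons,
      occ_concat u b x hx]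
    have hsc : (x <:+ a :: (u ++ [b])) ↔ x = a :: (u ++ [b]) ∨ x <:+ u ++ [b] :=
      List.suffix_cons_iff
    by_cases hxx : x = a :: (u ++ [b])
    · have hns : ¬ (x <:+ u ++ [b]) := fun hh => by
        rw [hxx] at hh; simpa using hh.length_le
      rw [if_neg hns, if_pos hxx, if_pos (hsc.mpr (Or.inl hxx))]
      ring
    · rw [if_neg hxx]
      simp only [hsc, hxx, false_or]
      ring
  -- decomposition for w₂
  have d2 : occ w₂ x + (if x = w₂ then 1 else 0)
      = occ v x + (if x <+: w₂ then 1 else 0) + (if x <:+ w₂ then 1 else 0) := by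
    rw [hw₂, show (c :: v ++ [d] : List A) = c :: (v ++ [d]) from rfl, occ_cons,
      occ_concat v d x hx]
    have hsc : (x <:+ c :: (v ++ [d])) ↔ x = c :: (v ++ [d]) ∨ x <:+ v ++ [d] :=
      List.suffix_cons_iff
    by_cases hxx : x = c :: (v ++ [d])
    · have hns : ¬ (x <:+ v ++ [d]) := fun hh => by
        rw [hxx] at hh; simpa using hh.length_le
      rw [if_neg hns, if_pos hxx, if_pos (hsc.mpr (Or.inl hxx))]
      ring
    · rw [if_neg hxx]
      simp only [hsc, hxx, false_or]
      ring
  linarith [d1, d2, hocc, hpre, hsuf, hwhole]
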